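/- Let G be a finitely generated group containing a normal subgroup N of finite index whose center is trivial. If Out(N) is virtually torsion-free, then Out(G) is virtually torsion-free. -/

import Mathlib

set_option linter.unusedSectionVars false

/-- The subgroup `Inn(G) ≤ Aut(G)` of inner automorphisms. -/
abbrev innAut (G : Type*) [Group G] : Subgroup (MulAut G) :=
  (MulAut.conj : G →* MulAut G).range

instance innAut_normal (G : Type*) [Group G] : (innAut G).Normal := by
  constructor
  rintro - ⟨g, rfl⟩ f
  refine ⟨f g, ?_⟩
  ext x
  simp [MulAut.conj_apply, map_mul, map_inv, mul_assoc]

/-- The outer automorphism group `Out(G) = Aut(G)/Inn(G)`. -/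
abbrev OutAut (G : Type*) [Group G] := MulAut G ⧸ innAut G

/-- A monoid is torsion-free if every non-identity element has infinite order
(the definition of `Monoid.IsTorsionFree` in the older Mathlib). -/
def Monoid.IsTorsionFree (G : Type*) [Monoid G] : Prop :=
  ∀ g : G, g ≠ 1 → ¬IsOfFinOrder g

/-- A group is virtually torsion-free if it has a torsion-free subgroup of finite index. -/
def VirtuallyTorsionFree (G : Type*) [Group G] : Prop :=
  ∃ H : Subgroup G, H.FiniteIndex ∧ Monoid.IsTorsionFree H

section Aux


variable {G : Type*} [Group G] (N : Subgroup G) [N.Normal]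

def charCore : Subgroup G := ⨅ f : G →* Equiv.Perm (G ⧸ N), f.ker

instance charCore_normal : (charCore N).Normal := by
  constructor
  intro x hx g
  simp only [charCore, Subgroup.mem_iInf, MonoidHom.mem_ker] at hx ⊢
  intro f
  simp [hx f]

theorem charCore_mem (φ : MulAut G) {x : G} (hx : x ∈ charCore N) : φ x ∈ charCore N := by
  simp only [charCore, Subgroup.mem_iInf, MonoidHom.mem_ker] at hx ⊢
  intro f
  exact hx (f.comp φ.toMonoidHom)

/-- the "acts trivially mod charCore" subgroup -/
def fixSub : Subgroup (MulAut G) where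
  carrier := {φ | ∀ g : G, g⁻¹ * φ g ∈ charCore N}
  one_mem' := by intro g; simpa using (charCore N).one_mem
  mul_mem' := by
    intro φ ψ hφ hψ g
    have h1 := hψ g
    have h2 := hφ (ψ g)
    have : g⁻¹ * (φ * ψ) g = (g⁻¹ * ψ g) * ((ψ g)⁻¹ * φ (ψ g)) := by
      show g⁻¹ * φ (ψ g) = _; group
    rw [this]
    exact (charCore N).mul_mem h1 h2
  inv_mem' := by
    intro φ hφ g
    have h := hφ (φ⁻¹ g)
    have h2 : (φ⁻¹ g)⁻¹ * g ∈ charCore N := by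
      have : φ (φ⁻¹ g) = g := by simp
      rwa [this] at h
    have : g⁻¹ * φ⁻¹ g = ((φ⁻¹ g)⁻¹ * g)⁻¹ := by group
    rw [this]
    exact (charCore N).inv_mem h2

theorem charCore_finiteIndex (hfg : Group.FG G) [N.FiniteIndex] : (charCore N).FiniteIndex := by
  have hfin : Finite (G →* Equiv.Perm (G ⧸ N)) := by
    obtain ⟨n, S, -, hS⟩ := Group.fg_iff'.mp hfg
    apply Finite.of_injective (fun f : G →* Equiv.Perm (G ⧸ N) => (fun x : (S : Set G) => f x))
    intro f g h
    refine MonoidHom.ext fun x => ?_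
    have h1 : Set.EqOn f g (S : Set G) := fun y hy => congrFun h ⟨y, hy⟩
    have h2 := MonoidHom.eqOn_closure h1
    rw [hS] at h2
    exact h2 (Subgroup.mem_top x)
  exact Subgroup.finiteIndex_iInf fun f => inferInstance

def permRep : MulAut G →* Equiv.Perm (G ⧸ charCore N) where
  toFun φ :=
    { toFun := QuotientGroup.map _ _ φ.toMonoidHom (fun x hx => Subgroup.mem_comap.mpr (charCore_mem N φ hx))
      invFun := QuotientGroup.map _ _ (φ⁻¹ : MulAut G).toMonoidHom
        (fun x hx => Subgroup.mem_comap.mpr (charCore_mem N φ⁻¹ hx))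
      left_inv := by
        intro q
        refine QuotientGroup.induction_on q ?_
        intro z
        rw [QuotientGroup.map_mk, QuotientGroup.map_mk]
        simp
      right_inv := by
        intro q
        refine QuotientGroup.induction_on q ?_
        intro z
        rw [QuotientGroup.map_mk, QuotientGroup.map_mk]
        simp }
  map_one' := by
    refine Equiv.ext fun q => QuotientGroup.induction_on q fun z => ?_
    simp [QuotientGroup.map_mk]
  map_mul' := by
    intro φ ψ
    refine Equiv.ext fun q => QuotientGroup.induction_on q fun z => ?_
    simp [QuotientGroup.map_mk, MulAut.mul_apply]

theorem ker_permRep_le : (permRep N).ker ≤ fixSub N := by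
  intro φ hφ g
  rw [MonoidHom.mem_ker] at hφ
  have h : QuotientGroup.map (charCore N) (charCore N) φ.toMonoidHom
      (fun x hx => Subgroup.mem_comap.mpr (charCore_mem N φ hx)) (QuotientGroup.mk g) = QuotientGroup.mk g := by
    have := congrArg (fun p : Equiv.Perm (G ⧸ charCore N) => p (QuotientGroup.mk g)) hφ
    simpa [permRep] using this
  rw [QuotientGroup.map_mk] at h
  have h2 : (QuotientGroup.mk g : G ⧸ charCore N) = QuotientGroup.mk (φ g) := h.symm
  rwa [QuotientGroup.eq] at h2

theorem fixSub_finiteIndex (hfg : Group.FG G) [N.FiniteIndex] : (fixSub N).FiniteIndex := by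
  haveI : (charCore N).FiniteIndex := charCore_finiteIndex N hfg
  haveI : Finite (G ⧸ charCore N) := Subgroup.finite_quotient_of_finiteIndex
  haveI : Finite (Equiv.Perm (G ⧸ charCore N)) := inferInstance
  haveI : (permRep N).ker.FiniteIndex := inferInstance
  exact Subgroup.finiteIndex_of_le (ker_permRep_le N)

theorem charCore_le' : charCore N ≤ N := by
  intro x hx
  simp only [charCore, Subgroup.mem_iInf, MonoidHom.mem_ker] at hx
  have h := hx (MulAction.toPermHom G (G ⧸ N))
  have h2 : x • ((1 : G) : G ⧸ N) = ((1 : G) : G ⧸ N) := by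
    have := congrArg (fun p => p ((1:G) : G ⧸ N)) h
    simpa using this
  have h3 : ((x * 1 : G) : G ⧸ N) = ((1 : G) : G ⧸ N) := h2
  rw [mul_one] at h3
  exact (QuotientGroup.eq_one_iff x).mp (by simpa using h3)

theorem fixSub_mapsN {φ : MulAut G} (hφ : φ ∈ fixSub N) {x : G} (hx : x ∈ N) : φ x ∈ N := by
  have h1 : x⁻¹ * φ x ∈ N := charCore_le' N (hφ x)
  have : φ x = x * (x⁻¹ * φ x) := by group
  rw [this]
  exact N.mul_mem hx h1

/-- restriction of an automorphism in `fixSub N` to `N` -/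
def restrictN : ↥(fixSub N) →* MulAut ↥N where
  toFun Φ :=
    { toFun := fun x => ⟨(Φ : MulAut G) x, fixSub_mapsN N Φ.2 x.2⟩
      invFun := fun x => ⟨((Φ⁻¹ : ↥(fixSub N)) : MulAut G) x, fixSub_mapsN N (Φ⁻¹).2 x.2⟩
      left_inv := by
        intro x
        refine Subtype.ext ?_
        show ((Φ⁻¹ : ↥(fixSub N)) : MulAut G) ((Φ : MulAut G) x) = (x : G)
        simp
      right_inv := by
        intro x
        refine Subtype.ext ?_
        show (Φ : MulAut G) (((Φ⁻¹ : ↥(fixSub N)) : MulAut G) x) = (x : G)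
        simp
      map_mul' := by
        intro x y
        refine Subtype.ext ?_
        simp }
  map_one' := by
    refine MulEquiv.ext fun x => Subtype.ext ?_
    simp
  map_mul' := by
    intro Φ Ψ
    refine MulEquiv.ext fun x => Subtype.ext ?_
    simp [MulAut.mul_apply]

theorem key_rigid (hZ : Subgroup.center ↥N = ⊥) (Φ : ↥(fixSub N)) (n₀ : ↥N)
    (h : restrictN N Φ = MulAut.conj n₀) : (Φ : MulAut G) = MulAut.conj (n₀ : G) := by
  set φ := (Φ : MulAut G) with hφdef
  have ha : ∀ y (hy : y ∈ N), φ y = (n₀ : G) * y * (n₀ : G)⁻¹ := by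
    intro y hy
    have := congrArg (fun e : MulAut ↥N => ((e ⟨y, hy⟩ : ↥N) : G)) h
    simpa [restrictN, MulAut.conj_apply] using this
  have main : ∀ x : G, φ x = (n₀ : G) * x * (n₀ : G)⁻¹ := by
    intro x
    set v := (n₀ : G)⁻¹ * φ x * (n₀ : G) with hvdef
    set w := x⁻¹ * v with hwdef
    have hwN : w ∈ N := by
      have h1 : x⁻¹ * (n₀ : G)⁻¹ * x ∈ N := by
        have := Subgroup.Normal.conj_mem ‹N.Normal› _ (N.inv_mem n₀.2) x⁻¹
        simpa [mul_assoc] using this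
      have h2 : x⁻¹ * φ x ∈ N := charCore_le' N (Φ.2 x)
      have hw2 : w = (x⁻¹ * (n₀ : G)⁻¹ * x) * (x⁻¹ * φ x) * (n₀ : G) := by
        rw [hwdef, hvdef]; group
      rw [hw2]
      exact N.mul_mem (N.mul_mem h1 h2) n₀.2
    have hcomm : ∀ y ∈ N, w * y = y * w := by
      intro y hy
      have hxyx : x * y * x⁻¹ ∈ N := Subgroup.Normal.conj_mem ‹N.Normal› _ hy x
      have e1 : φ (x * y * x⁻¹) = (n₀ : G) * (x * y * x⁻¹) * (n₀ : G)⁻¹ := ha _ hxyx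
      have e2 : φ (x * y * x⁻¹) = φ x * ((n₀ : G) * y * (n₀ : G)⁻¹) * (φ x)⁻¹ := by
        rw [map_mul, map_mul, map_inv, ha y hy]
      have hv : v * y * v⁻¹ = x * y * x⁻¹ := by
        have e3 : φ x * ((n₀ : G) * y * (n₀ : G)⁻¹) * (φ x)⁻¹
            = (n₀ : G) * (x * y * x⁻¹) * (n₀ : G)⁻¹ := by rw [← e2, e1]
        rw [hvdef]
        have := congrArg (fun z => (n₀ : G)⁻¹ * z * (n₀ : G)) e3
        calc (n₀:G)⁻¹ * φ x * n₀ * y * ((n₀:G)⁻¹ * φ x * n₀)⁻¹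
            = (n₀:G)⁻¹ * (φ x * ((n₀:G) * y * (n₀:G)⁻¹) * (φ x)⁻¹) * n₀ := by group
          _ = (n₀:G)⁻¹ * ((n₀ : G) * (x * y * x⁻¹) * (n₀ : G)⁻¹) * n₀ := by rw [e3]
          _ = x * y * x⁻¹ := by group
      calc w * y = x⁻¹ * (v * y * v⁻¹) * v := by rw [hwdef]; group
        _ = x⁻¹ * (x * y * x⁻¹) * v := by rw [hv]
        _ = y * w := by rw [hwdef]; group
    have hcen : (⟨w, hwN⟩ : ↥N) ∈ Subgroup.center ↥N := by
      rw [Subgroup.mem_center_iff]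
      intro b
      exact Subtype.ext (hcomm b b.2).symm
    rw [hZ, Subgroup.mem_bot] at hcen
    have hw1 : w = 1 := congrArg Subtype.val hcen
    have : v = x := by
      have := hw1
      rw [hwdef] at this
      have h4 : x * (x⁻¹ * v) = x * 1 := by rw [this]
      rw [mul_one] at h4
      rw [← h4]
      group
    rw [hvdef] at this
    calc φ x = (n₀:G) * ((n₀:G)⁻¹ * φ x * (n₀:G)) * (n₀:G)⁻¹ := by group
      _ = (n₀:G) * x * (n₀:G)⁻¹ := by rw [this]
  refine MulEquiv.ext fun x => ?_
  rw [MulAut.conj_apply]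
  exact main x

theorem key_torsion [N.FiniteIndex] (hZ : Subgroup.center ↥N = ⊥)
    (T' : Subgroup (MulAut ↥N ⧸ innAut ↥N)) (hT' : Monoid.IsTorsionFree ↥T')
    (Φ : ↥(fixSub N))
    (hσ : QuotientGroup.mk' (innAut ↥N) (restrictN N Φ) ∈ T')
    {n : ℕ} (hn : 0 < n) (hpow : (Φ : MulAut G) ^ n ∈ innAut G) :
    (Φ : MulAut G) ∈ innAut G := by
  obtain ⟨g, hg⟩ := hpow
  set m := N.index with hmdef
  have hm : m ≠ 0 := Subgroup.FiniteIndex.index_ne_zero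
  have hgm : g ^ m ∈ N := N.pow_index_mem g
  have hφnm : (Φ : MulAut G) ^ (n * m) = MulAut.conj (g ^ m) := by
    rw [pow_mul, ← hg, ← map_pow]
  have hres : restrictN N (Φ ^ (n * m)) = MulAut.conj (⟨g ^ m, hgm⟩ : ↥N) := by
    refine MulEquiv.ext fun x => Subtype.ext ?_
    show ((Φ ^ (n*m) : ↥(fixSub N)) : MulAut G) (x : G) = _
    rw [SubgroupClass.coe_pow, hφnm]
    rfl
  have h1 : (QuotientGroup.mk' (innAut ↥N) (restrictN N Φ)) ^ (n * m) = 1 := by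
    rw [← map_pow, ← map_pow, hres]
    exact (QuotientGroup.eq_one_iff _).mpr ⟨_, rfl⟩
  have ht : (⟨_, hσ⟩ : ↥T') = 1 := by
    by_contra hne
    refine hT' _ hne (isOfFinOrder_iff_pow_eq_one.mpr ⟨n * m, by positivity, ?_⟩)
    exact Subtype.ext (by rw [SubmonoidClass.coe_pow]; exact h1)
  have hσ1 : QuotientGroup.mk' (innAut ↥N) (restrictN N Φ) = 1 := congrArg Subtype.val ht
  have hinn : restrictN N Φ ∈ innAut ↥N := (QuotientGroup.eq_one_iff _).mp hσ1
  obtain ⟨n₀, hn₀⟩ := hinn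
  exact ⟨(n₀ : G), (key_rigid N hZ Φ n₀ hn₀.symm).symm⟩

end Aux

/-- If a finitely generated group `G` has a finite-index normal subgroup `N` with trivial
center and `Out(N)` is virtually torsion-free, then `Out(G)` is virtually torsion-free. -/
theorem virtuallyTorsionFree_out_of_normal (G : Type*) [Group G] (hfg : Group.FG G)
    (N : Subgroup G) [N.Normal] (hfin : N.FiniteIndex)
    (hZ : Subgroup.center ↥N = ⊥)
    (hout : VirtuallyTorsionFree (OutAut ↥N)) :
    VirtuallyTorsionFree (OutAut G) := by
  obtain ⟨T', hT'fin, hT'tf⟩ := hout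
  haveI := hfin
  haveI := hT'fin
  let σ : ↥(fixSub N) →* OutAut ↥N :=
    (QuotientGroup.mk' (innAut ↥N)).comp (restrictN N)
  let X : Subgroup ↥(fixSub N) := Subgroup.comap σ T'
  let S : Subgroup (MulAut G) := X.map (fixSub N).subtype
  refine ⟨S.map (QuotientGroup.mk' (innAut G)), ?_, ?_⟩
  · -- finite index
    have hNSfi : (fixSub N).FiniteIndex := fixSub_finiteIndex N hfg
    have hX : X.FiniteIndex := by
      constructor
      rw [Subgroup.index_comap]
      have h1 : (T'.subgroupOf σ.range).FiniteIndex := inferInstance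
      exact h1.index_ne_zero
    have hS : S.FiniteIndex := by
      constructor
      rw [Subgroup.index_map_of_injective _ (Subgroup.subtype_injective _),
        Subgroup.range_subtype]
      exact mul_ne_zero hX.index_ne_zero hNSfi.index_ne_zero
    constructor
    intro h0
    have hdvd := S.index_map_dvd (f := QuotientGroup.mk' (innAut G))
      (QuotientGroup.mk'_surjective _)
    rw [h0] at hdvd
    exact hS.index_ne_zero (Nat.eq_zero_of_zero_dvd hdvd)
  · -- torsion free
    intro x hx hord
    obtain ⟨n, hn, hxn⟩ := isOfFinOrder_iff_pow_eq_one.mp hord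
    have hc : (x : OutAut G) ^ n = 1 := by
      rw [← SubgroupClass.coe_pow, hxn]; rfl
    obtain ⟨φ, hφS, hφx⟩ := x.2
    obtain ⟨Φ, hΦX, hΦφ⟩ := hφS
    have hσT : σ Φ ∈ T' := hΦX
    have hpow : (Φ : MulAut G) ^ n ∈ innAut G := by
      have h2 : QuotientGroup.mk' (innAut G) (((Φ : MulAut G)) ^ n) = 1 := by
        rw [map_pow]
        have : QuotientGroup.mk' (innAut G) (Φ : MulAut G) = (x : OutAut G) := by
          rw [show ((Φ : MulAut G)) = φ from hΦφ]; exact hφx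
        rw [this, hc]
      exact (QuotientGroup.eq_one_iff _).mp h2
    have hres := key_torsion N hZ T' hT'tf Φ hσT hn hpow
    apply hx
    have hx1 : (x : OutAut G) = 1 := by
      rw [← hφx, ← (show ((Φ : MulAut G)) = φ from hΦφ)]
      exact (QuotientGroup.eq_one_iff _).mpr hres
    exact Subtype.ext hx1
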